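/- Let A₁, B₁ be the apexes of the equilateral triangles erected on sides BC and CA of a nondegenerate triangle ABC on the opposite sides of those lines from A and B respectively (the outer apexes), and let C₁' be the apex of the equilateral triangle erected on side AB on the same side of line AB as C (the inner apex), i.e. dist A₁ B = dist A₁ C = dist B C, dist A B₁ = dist B₁ C = dist A C, dist A C₁' = dist B C₁' = dist A B. Then the midpoint of the segment A₁B₁ equals the midpoint of the segment CC₁': (A₁+B₁)/2 = (C+C₁')/2. -/

import Mathlib

open EuclideanGeometry AffineSubspace MeasureTheory

namespace NapoleonAux

lemma pt_ext {x y : EuclideanSpace ℝ (Fin 2)} (h0 : x 0 = y 0) (h1 : x 1 = y 1) :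
    x = y := by
  ext i
  fin_cases i
  · exact h0
  · exact h1

/-- The "cross product with `v`" linear functional on the plane. -/
def crossL (v0 v1 : ℝ) : EuclideanSpace ℝ (Fin 2) →ₗ[ℝ] ℝ where
  toFun w := v0 * w 1 - v1 * w 0
  map_add' x y := by
    show v0 * (x 1 + y 1) - v1 * (x 0 + y 0)
      = (v0 * x 1 - v1 * x 0) + (v0 * y 1 - v1 * y 0)
    ring
  map_smul' c x := by
    show v0 * (c * x 1) - v1 * (c * x 0) = c * (v0 * x 1 - v1 * x 0)
    ring

lemma sameRay_mul (a b : ℝ) (h : SameRay ℝ a b) : 0 ≤ a * b := by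
  rcases h with h | h | ⟨r₁, r₂, h₁, h₂, h⟩
  · simp [h]
  · simp [h]
  · simp only [smul_eq_mul] at h
    have key : r₁ * r₂ * (a * b) = (r₁ * a) ^ 2 := by linear_combination (-(r₁ * a)) * h
    nlinarith [sq_nonneg (r₁ * a), mul_pos h₁ h₂]

lemma crossL_of_mem {B C p : EuclideanSpace ℝ (Fin 2)}
    (hp : p ∈ line[ℝ, B, C]) :
    ∃ r : ℝ, p 0 = B 0 + r * (C 0 - B 0) ∧ p 1 = B 1 + r * (C 1 - B 1) := by
  have hd : p -ᵥ B ∈ vectorSpan ℝ ({B, C} : Set _) := by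
    rw [← direction_affineSpan]
    exact AffineSubspace.vsub_mem_direction hp (left_mem_affineSpan_pair ℝ B C)
  rw [mem_vectorSpan_pair_rev] at hd
  obtain ⟨r, hr⟩ := hd
  refine ⟨r, ?_, ?_⟩
  · have := congrArg (fun w : EuclideanSpace ℝ (Fin 2) => w 0) hr
    have h1 : (r • (C -ᵥ B) : EuclideanSpace ℝ (Fin 2)) 0 = r * (C 0 - B 0) := rfl
    have h2 : (p -ᵥ B : EuclideanSpace ℝ (Fin 2)) 0 = p 0 - B 0 := rfl
    simp only [h1, h2] at this
    linarith
  · have := congrArg (fun w : EuclideanSpace ℝ (Fin 2) => w 1) hr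
    have h1 : (r • (C -ᵥ B) : EuclideanSpace ℝ (Fin 2)) 1 = r * (C 1 - B 1) := rfl
    have h2 : (p -ᵥ B : EuclideanSpace ℝ (Fin 2)) 1 = p 1 - B 1 := rfl
    simp only [h1, h2] at this
    linarith

/-- Strictly opposite sides of line BC gives a sign condition on the cross
functional. -/
lemma oppSide_cross {B C x y : EuclideanSpace ℝ (Fin 2)}
    (h : (affineSpan ℝ {B, C}).SOppSide x y) :
    ((C 0 - B 0) * (x 1 - B 1) - (C 1 - B 1) * (x 0 - B 0)) *
      ((C 0 - B 0) * (y 1 - B 1) - (C 1 - B 1) * (y 0 - B 0)) ≤ 0 := by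
  obtain ⟨⟨p₁, hp₁, p₂, hp₂, hray⟩, -, -⟩ := h
  obtain ⟨r₁, hr₁0, hr₁1⟩ := crossL_of_mem hp₁
  obtain ⟨r₂, hr₂0, hr₂1⟩ := crossL_of_mem hp₂
  have hmap := hray.map (crossL (C 0 - B 0) (C 1 - B 1))
  have e₁ : (crossL (C 0 - B 0) (C 1 - B 1)) (x -ᵥ p₁)
      = (C 0 - B 0) * (x 1 - B 1) - (C 1 - B 1) * (x 0 - B 0) := by
    show (C 0 - B 0) * (x 1 - p₁ 1) - (C 1 - B 1) * (x 0 - p₁ 0) = _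
    rw [hr₁0, hr₁1]; ring
  have e₂ : (crossL (C 0 - B 0) (C 1 - B 1)) (p₂ -ᵥ y)
      = -((C 0 - B 0) * (y 1 - B 1) - (C 1 - B 1) * (y 0 - B 0)) := by
    show (C 0 - B 0) * (p₂ 1 - y 1) - (C 1 - B 1) * (p₂ 0 - y 0) = _
    rw [hr₂0, hr₂1]; ring
  rw [e₁, e₂] at hmap
  have := sameRay_mul _ _ hmap
  linarith

/-- Strictly same side of line BC gives a sign condition on the cross
functional. -/
lemma sameSide_cross {B C x y : EuclideanSpace ℝ (Fin 2)}
    (h : (affineSpan ℝ {B, C}).SSameSide x y) :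
    0 ≤ ((C 0 - B 0) * (x 1 - B 1) - (C 1 - B 1) * (x 0 - B 0)) *
      ((C 0 - B 0) * (y 1 - B 1) - (C 1 - B 1) * (y 0 - B 0)) := by
  obtain ⟨⟨p₁, hp₁, p₂, hp₂, hray⟩, -, -⟩ := h
  obtain ⟨r₁, hr₁0, hr₁1⟩ := crossL_of_mem hp₁
  obtain ⟨r₂, hr₂0, hr₂1⟩ := crossL_of_mem hp₂
  have hmap := hray.map (crossL (C 0 - B 0) (C 1 - B 1))
  have e₁ : (crossL (C 0 - B 0) (C 1 - B 1)) (x -ᵥ p₁)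
      = (C 0 - B 0) * (x 1 - B 1) - (C 1 - B 1) * (x 0 - B 0) := by
    show (C 0 - B 0) * (x 1 - p₁ 1) - (C 1 - B 1) * (x 0 - p₁ 0) = _
    rw [hr₁0, hr₁1]; ring
  have e₂ : (crossL (C 0 - B 0) (C 1 - B 1)) (y -ᵥ p₂)
      = (C 0 - B 0) * (y 1 - B 1) - (C 1 - B 1) * (y 0 - B 0) := by
    show (C 0 - B 0) * (y 1 - p₂ 1) - (C 1 - B 1) * (y 0 - p₂ 0) = _
    rw [hr₂0, hr₂1]; ring
  rw [e₁, e₂] at hmap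
  exact sameRay_mul _ _ hmap

lemma dist_sq (x y : EuclideanSpace ℝ (Fin 2)) :
    dist x y ^ 2 = (x 0 - y 0) ^ 2 + (x 1 - y 1) ^ 2 := by
  rw [EuclideanSpace.dist_eq, Real.sq_sqrt (by positivity)]
  simp [Fin.sum_univ_two, Real.dist_eq, sq_abs]

/-- Characterization of an equilateral apex in coordinates. -/
lemma apex_param {p0 p1 q0 q1 x0 x1 : ℝ}
    (hv : (q0 - p0) ^ 2 + (q1 - p1) ^ 2 ≠ 0)
    (h1 : (x0 - p0) ^ 2 + (x1 - p1) ^ 2 = (q0 - p0) ^ 2 + (q1 - p1) ^ 2)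
    (h2 : (x0 - q0) ^ 2 + (x1 - q1) ^ 2 = (q0 - p0) ^ 2 + (q1 - p1) ^ 2) :
    ∃ t : ℝ, t ^ 2 = 3 / 4 ∧
      x0 = (p0 + q0) / 2 - t * (q1 - p1) ∧
      x1 = (p1 + q1) / 2 + t * (q0 - p0) := by
  have hperp : (x0 - (p0 + q0) / 2) * (q0 - p0) + (x1 - (p1 + q1) / 2) * (q1 - p1) = 0 := by
    linear_combination (h1 - h2) / 2
  have hnorm : (x0 - (p0 + q0) / 2) ^ 2 + (x1 - (p1 + q1) / 2) ^ 2
      = 3 / 4 * ((q0 - p0) ^ 2 + (q1 - p1) ^ 2) := by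
    linear_combination (h1 + h2) / 2
  refine ⟨((q0 - p0) * (x1 - (p1 + q1) / 2) - (q1 - p1) * (x0 - (p0 + q0) / 2)) /
      ((q0 - p0) ^ 2 + (q1 - p1) ^ 2), ?_, ?_, ?_⟩
  · rw [div_pow, div_eq_iff (pow_ne_zero 2 hv)]
    linear_combination ((q0 - p0) ^ 2 + (q1 - p1) ^ 2) * hnorm
      - ((x0 - (p0 + q0) / 2) * (q0 - p0) + (x1 - (p1 + q1) / 2) * (q1 - p1)) * hperp
  · have e0 : (x0 - (p0 + q0) / 2) * ((q0 - p0) ^ 2 + (q1 - p1) ^ 2)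
        = ((q0 - p0) * (x1 - (p1 + q1) / 2) - (q1 - p1) * (x0 - (p0 + q0) / 2))
          * (-(q1 - p1)) := by
      linear_combination (q0 - p0) * hperp
    have e0' : x0 - (p0 + q0) / 2
        = ((q0 - p0) * (x1 - (p1 + q1) / 2) - (q1 - p1) * (x0 - (p0 + q0) / 2)) /
          ((q0 - p0) ^ 2 + (q1 - p1) ^ 2) * (-(q1 - p1)) := by
      rw [div_mul_eq_mul_div, eq_div_iff hv]
      linear_combination e0
    linarith [e0']
  · have e1 : (x1 - (p1 + q1) / 2) * ((q0 - p0) ^ 2 + (q1 - p1) ^ 2)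
        = ((q0 - p0) * (x1 - (p1 + q1) / 2) - (q1 - p1) * (x0 - (p0 + q0) / 2))
          * (q0 - p0) := by
      linear_combination (q1 - p1) * hperp
    have e1' : x1 - (p1 + q1) / 2
        = ((q0 - p0) * (x1 - (p1 + q1) / 2) - (q1 - p1) * (x0 - (p0 + q0) / 2)) /
          ((q0 - p0) ^ 2 + (q1 - p1) ^ 2) * (q0 - p0) := by
      rw [div_mul_eq_mul_div, eq_div_iff hv]
      linear_combination e1
    linarith [e1']

/-- The determinant of a nondegenerate triangle is nonzero. -/
lemma det_ne_zero {A B C : EuclideanSpace ℝ (Fin 2)}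
    (h : AffineIndependent ℝ ![A, B, C]) :
    (B 0 - A 0) * (C 1 - A 1) - (B 1 - A 1) * (C 0 - A 0) ≠ 0 := by
  intro h0
  rw [affineIndependent_iff_not_collinear_set] at h
  apply h
  rw [collinear_iff_of_mem (Set.mem_insert A {B, C})]
  by_cases hz : (B 0 - A 0) ^ 2 + (B 1 - A 1) ^ 2 = 0
  · -- B = A
    have hBA : B = A := by
      apply pt_ext
      · nlinarith [sq_nonneg (B 0 - A 0), sq_nonneg (B 1 - A 1)]
      · nlinarith [sq_nonneg (B 0 - A 0), sq_nonneg (B 1 - A 1)]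
    refine ⟨C -ᵥ A, ?_⟩
    intro p hp
    rcases hp with rfl | rfl | rfl
    · exact ⟨0, by simp⟩
    · exact ⟨0, by simp [hBA]⟩
    · exact ⟨1, by simp⟩
  · have hN : ((B 0 - A 0) ^ 2 + (B 1 - A 1) ^ 2 : ℝ) ≠ 0 := hz
    refine ⟨B -ᵥ A, ?_⟩
    intro p hp
    rcases hp with rfl | rfl | rfl
    · exact ⟨0, by simp⟩
    · exact ⟨1, by simp⟩
    · refine ⟨((p 0 - A 0) * (B 0 - A 0) + (p 1 - A 1) * (B 1 - A 1)) /
          ((B 0 - A 0) ^ 2 + (B 1 - A 1) ^ 2), ?_⟩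
      have key0 : (p 0 - A 0) * ((B 0 - A 0) ^ 2 + (B 1 - A 1) ^ 2)
          = ((p 0 - A 0) * (B 0 - A 0) + (p 1 - A 1) * (B 1 - A 1)) * (B 0 - A 0) := by
        linear_combination (-(B 1 - A 1)) * h0
      have key1 : (p 1 - A 1) * ((B 0 - A 0) ^ 2 + (B 1 - A 1) ^ 2)
          = ((p 0 - A 0) * (B 0 - A 0) + (p 1 - A 1) * (B 1 - A 1)) * (B 1 - A 1) := by
        linear_combination (B 0 - A 0) * h0
      set r : ℝ := ((p 0 - A 0) * (B 0 - A 0) + (p 1 - A 1) * (B 1 - A 1)) /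
          ((B 0 - A 0) ^ 2 + (B 1 - A 1) ^ 2) with hr
      refine (pt_ext ?_ ?_).symm
      · show r * (B 0 - A 0) + A 0 = p 0
        have : r * (B 0 - A 0) = p 0 - A 0 := by
          rw [hr, div_mul_eq_mul_div, ← key0, mul_div_assoc, div_self hN, mul_one]
        linarith
      · show r * (B 1 - A 1) + A 1 = p 1
        have : r * (B 1 - A 1) = p 1 - A 1 := by
          rw [hr, div_mul_eq_mul_div, ← key1, mul_div_assoc, div_self hN, mul_one]
        linarith

lemma same_of_sq {t s dd : ℝ} (ht : t ^ 2 = 3 / 4) (hs : s ^ 2 = 3 / 4)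
    (h1 : t * dd ≤ 0) (h2 : s * dd ≤ 0) (hdd : dd ≠ 0) : t = s := by
  have hfac : (t - s) * (t + s) = 0 := by linear_combination ht - hs
  rcases mul_eq_zero.1 hfac with h | h
  · linarith [sub_eq_zero.1 h]
  · -- t = -s; show both are zero, contradiction
    exfalso
    rcases lt_or_gt_of_ne hdd with hneg | hpos
    · have ht' : 0 ≤ t := by
        by_contra hc
        push_neg at hc
        nlinarith [mul_pos_of_neg_of_neg hc hneg]
      have hs' : 0 ≤ s := by
        by_contra hc
        push_neg at hc
        nlinarith [mul_pos_of_neg_of_neg hc hneg]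
      have : t = 0 := by linarith
      rw [this] at ht; norm_num at ht
    · have ht' : t ≤ 0 := by
        by_contra hc
        push_neg at hc
        nlinarith [mul_pos hc hpos]
      have hs' : s ≤ 0 := by
        by_contra hc
        push_neg at hc
        nlinarith [mul_pos hc hpos]
      have : t = 0 := by linarith
      rw [this] at ht; norm_num at ht

end NapoleonAux

set_option maxHeartbeats 2000000 in
open NapoleonAux in
theorem napoleon_mixed_midpoint
    (A B C A₁ B₁ C₁' : EuclideanSpace ℝ (Fin 2))
    (hABC : AffineIndependent ℝ ![A, B, C])
    (hA₁ : dist A₁ B = dist B C) (hA₁' : dist A₁ C = dist B C)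
    (hB₁ : dist A B₁ = dist A C) (hB₁' : dist B₁ C = dist A C)
    (hC₁' : dist A C₁' = dist A B) (hC₁'2 : dist B C₁' = dist A B)
    (hsideA : (affineSpan ℝ {B, C}).SOppSide A A₁)
    (hsideB : (affineSpan ℝ {C, A}).SOppSide B B₁)
    (hsideC : (affineSpan ℝ {A, B}).SSameSide C₁' C) :
    (2:ℝ)⁻¹ • (A₁ + B₁) = (2:ℝ)⁻¹ • (C + C₁') := by
  have hd : (B 0 - A 0) * (C 1 - A 1) - (B 1 - A 1) * (C 0 - A 0) ≠ 0 :=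
    det_ne_zero hABC
  -- side lengths nonzero
  have hvA : (C 0 - B 0) ^ 2 + (C 1 - B 1) ^ 2 ≠ 0 := by
    intro h; apply hd
    have h0 : C 0 - B 0 = 0 := by nlinarith [sq_nonneg (C 0 - B 0), sq_nonneg (C 1 - B 1)]
    have h1 : C 1 - B 1 = 0 := by nlinarith [sq_nonneg (C 0 - B 0), sq_nonneg (C 1 - B 1)]
    linear_combination (B 0 - A 0) * h1 - (B 1 - A 1) * h0
  have hvB : (A 0 - C 0) ^ 2 + (A 1 - C 1) ^ 2 ≠ 0 := by
    intro h; apply hd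
    have h0 : A 0 - C 0 = 0 := by nlinarith [sq_nonneg (A 0 - C 0), sq_nonneg (A 1 - C 1)]
    have h1 : A 1 - C 1 = 0 := by nlinarith [sq_nonneg (A 0 - C 0), sq_nonneg (A 1 - C 1)]
    linear_combination (-(B 0 - A 0)) * h1 + (B 1 - A 1) * h0
  have hvC : (B 0 - A 0) ^ 2 + (B 1 - A 1) ^ 2 ≠ 0 := by
    intro h; apply hd
    have h0 : B 0 - A 0 = 0 := by nlinarith [sq_nonneg (B 0 - A 0), sq_nonneg (B 1 - A 1)]
    have h1 : B 1 - A 1 = 0 := by nlinarith [sq_nonneg (B 0 - A 0), sq_nonneg (B 1 - A 1)]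
    linear_combination (C 1 - A 1) * h0 - (C 0 - A 0) * h1
  -- convert distance hypotheses to coordinates
  have dA1B : (A₁ 0 - B 0) ^ 2 + (A₁ 1 - B 1) ^ 2 = (C 0 - B 0) ^ 2 + (C 1 - B 1) ^ 2 := by
    have h' : dist A₁ B ^ 2 = dist B C ^ 2 := by rw [hA₁]
    rw [dist_sq, dist_sq] at h'
    linear_combination h'
  have dA1C : (A₁ 0 - C 0) ^ 2 + (A₁ 1 - C 1) ^ 2 = (C 0 - B 0) ^ 2 + (C 1 - B 1) ^ 2 := by
    have h' : dist A₁ C ^ 2 = dist B C ^ 2 := by rw [hA₁']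
    rw [dist_sq, dist_sq] at h'
    linear_combination h'
  have dB1C : (B₁ 0 - C 0) ^ 2 + (B₁ 1 - C 1) ^ 2 = (A 0 - C 0) ^ 2 + (A 1 - C 1) ^ 2 := by
    have h' : dist B₁ C ^ 2 = dist A C ^ 2 := by rw [hB₁']
    rw [dist_sq, dist_sq] at h'
    linear_combination h'
  have dB1A : (B₁ 0 - A 0) ^ 2 + (B₁ 1 - A 1) ^ 2 = (A 0 - C 0) ^ 2 + (A 1 - C 1) ^ 2 := by
    have h' : dist A B₁ ^ 2 = dist A C ^ 2 := by rw [hB₁]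
    rw [dist_sq, dist_sq] at h'
    linear_combination h'
  have dC1A : (C₁' 0 - A 0) ^ 2 + (C₁' 1 - A 1) ^ 2 = (B 0 - A 0) ^ 2 + (B 1 - A 1) ^ 2 := by
    have h' : dist A C₁' ^ 2 = dist A B ^ 2 := by rw [hC₁']
    rw [dist_sq, dist_sq] at h'
    linear_combination h'
  have dC1B : (C₁' 0 - B 0) ^ 2 + (C₁' 1 - B 1) ^ 2 = (B 0 - A 0) ^ 2 + (B 1 - A 1) ^ 2 := by
    have h' : dist B C₁' ^ 2 = dist A B ^ 2 := by rw [hC₁'2]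
    rw [dist_sq, dist_sq] at h'
    linear_combination h'
  -- apex parametrizations
  obtain ⟨t₁, ht₁sq, hA₁0, hA₁1⟩ := apex_param hvA dA1B dA1C
  obtain ⟨t₂, ht₂sq, hB₁0, hB₁1⟩ := apex_param hvB dB1C dB1A
  obtain ⟨t₃, ht₃sq, hC₁0, hC₁1⟩ := apex_param hvC dC1A dC1B
  -- side conditions give sign constraints
  have hVA : (0:ℝ) < (C 0 - B 0) ^ 2 + (C 1 - B 1) ^ 2 :=
    lt_of_le_of_ne (by positivity) (Ne.symm hvA)
  have hVB : (0:ℝ) < (A 0 - C 0) ^ 2 + (A 1 - C 1) ^ 2 :=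
    lt_of_le_of_ne (by positivity) (Ne.symm hvB)
  have hVC : (0:ℝ) < (B 0 - A 0) ^ 2 + (B 1 - A 1) ^ 2 :=
    lt_of_le_of_ne (by positivity) (Ne.symm hvC)
  have hs1 : t₁ * ((B 0 - A 0) * (C 1 - A 1) - (B 1 - A 1) * (C 0 - A 0)) ≤ 0 := by
    have h := oppSide_cross hsideA
    have e2 : (C 0 - B 0) * (A₁ 1 - B 1) - (C 1 - B 1) * (A₁ 0 - B 0)
        = t₁ * ((C 0 - B 0) ^ 2 + (C 1 - B 1) ^ 2) := by
      rw [hA₁0, hA₁1]; ring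
    rw [e2] at h
    by_contra hc
    push_neg at hc
    linarith [mul_pos hc hVA]
  have hs2 : t₂ * ((B 0 - A 0) * (C 1 - A 1) - (B 1 - A 1) * (C 0 - A 0)) ≤ 0 := by
    have h := oppSide_cross hsideB
    have e2 : (A 0 - C 0) * (B₁ 1 - C 1) - (A 1 - C 1) * (B₁ 0 - C 0)
        = t₂ * ((A 0 - C 0) ^ 2 + (A 1 - C 1) ^ 2) := by
      rw [hB₁0, hB₁1]; ring
    rw [e2] at h
    by_contra hc
    push_neg at hc
    linarith [mul_pos hc hVB]
  have hs3 : 0 ≤ t₃ * ((B 0 - A 0) * (C 1 - A 1) - (B 1 - A 1) * (C 0 - A 0)) := by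
    have h := sameSide_cross hsideC
    have e2 : (B 0 - A 0) * (C₁' 1 - A 1) - (B 1 - A 1) * (C₁' 0 - A 0)
        = t₃ * ((B 0 - A 0) ^ 2 + (B 1 - A 1) ^ 2) := by
      rw [hC₁0, hC₁1]; ring
    rw [e2] at h
    by_contra hc
    push_neg at hc
    linarith [mul_pos (neg_pos.2 hc) hVC]
  -- conclude the relations among the t's
  have h12 : t₁ = t₂ := same_of_sq ht₁sq ht₂sq hs1 hs2 hd
  have h13 : t₁ = -t₃ := by
    have hneg : (-t₃) ^ 2 = 3 / 4 := (neg_sq t₃).trans ht₃sq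
    have hneg' : (-t₃) * ((B 0 - A 0) * (C 1 - A 1) - (B 1 - A 1) * (C 0 - A 0)) ≤ 0 := by
      linarith [hs3]
    exact same_of_sq ht₁sq hneg hs1 hneg' hd
  -- final coordinate computation
  have hsum : A₁ + B₁ = C + C₁' := by
    apply pt_ext
    · show A₁ 0 + B₁ 0 = C 0 + C₁' 0
      rw [hA₁0, hB₁0, hC₁0, ← h12, h13]; ring
    · show A₁ 1 + B₁ 1 = C 1 + C₁' 1
      rw [hA₁1, hB₁1, hC₁1, ← h12, h13]; ring
  rw [hsum]
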